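/- For any complex vector space W and any positive integer N, one has the direct sum decomposition of subspaces Ē(W) = E(W) ⊕ Ē₀(W) inside F(W); that is, E(W) ∩ Ē₀(W) = 0 and every element of Ē(W) is the sum of an element of E(W) and an element of Ē₀(W). -/

import Mathlib

open scoped TensorProduct

noncomputable section
namespace Twisted

variable (N : ℕ) (W : Type) [AddCommGroup W] [Module ℂ W]

/-- The shift operator on `F(W) = (ℤ → End W)`, encoding multiplication by `x`:
`(x·a)_k = a_{k+N}`. -/
def shiftE : Module.End ℂ (ℤ → Module.End ℂ W) where
  toFun a := fun k => a (k + N)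
  map_add' _ _ := rfl
  map_smul' _ _ := rfl

/-- The action of `ℂ[x]` on `F(W)`. -/
def polyAct (p : Polynomial ℂ) (a : ℤ → Module.End ℂ W) : ℤ → Module.End ℂ W :=
  Polynomial.aeval (shiftE N W) p a

/-- Membership in `E(W)`. -/
def memE (a : ℤ → Module.End ℂ W) : Prop :=
  ∀ w : W, ∃ M : ℤ, ∀ k ≥ M, a k w = 0

/-- Membership in `Ē(W)`. -/
def memEbar (a : ℤ → Module.End ℂ W) : Prop :=
  ∃ p : Polynomial ℂ, p ≠ 0 ∧ memE W (polyAct N W p a)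

/-- Membership in `Ē₀(W)`. -/
def memE0 (a : ℤ → Module.End ℂ W) : Prop :=
  ∃ p : Polynomial ℂ, p ≠ 0 ∧ polyAct N W p a = 0


lemma shiftE_pow (i : ℕ) (a : ℤ → Module.End ℂ W) (k : ℤ) :
    ((shiftE N W ^ i) a) k = a (k + i * N) := by
  induction i generalizing a k with
  | zero => simp
  | succ n ih =>
      rw [pow_succ]
      have : ((shiftE N W ^ n * shiftE N W) a) k = ((shiftE N W ^ n) (shiftE N W a)) k := rfl
      rw [this, ih]
      show a (k + n * N + N) = _
      congr 1
      push_cast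
      ring_nf

lemma polyAct_apply (p : Polynomial ℂ) (a : ℤ → Module.End ℂ W) (k : ℤ) :
    polyAct N W p a k =
      ∑ i ∈ Finset.range (p.natDegree + 1), p.coeff i • a (k + i * N) := by
  unfold polyAct
  rw [Polynomial.aeval_eq_sum_range]
  rw [LinearMap.sum_apply]
  rw [Finset.sum_apply]
  refine Finset.sum_congr rfl fun i _ => ?_
  rw [LinearMap.smul_apply, Pi.smul_apply, shiftE_pow]

lemma polyAct_apply_apply (p : Polynomial ℂ) (a : ℤ → Module.End ℂ W) (k : ℤ) (w : W) :
    polyAct N W p a k w =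
      ∑ i ∈ Finset.range (p.natDegree + 1), p.coeff i • a (k + i * N) w := by
  rw [polyAct_apply, LinearMap.sum_apply]
  refine Finset.sum_congr rfl fun i _ => ?_
  rw [LinearMap.smul_apply]


lemma part1 (hN : 0 < N) (a : ℤ → Module.End ℂ W) (ha : memE W a)
    (p : Polynomial ℂ) (hp : p ≠ 0) (hpa : polyAct N W p a = 0) : a = 0 := by
  set t := p.natTrailingDegree with ht
  have hct : p.coeff t ≠ 0 := by
    rw [← Polynomial.trailingCoeff]
    exact mt Polynomial.trailingCoeff_eq_zero.mp hp
  have htD : t ≤ p.natDegree := p.natTrailingDegree_le_natDegree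
  funext k
  ext w
  obtain ⟨M, hM⟩ := ha w
  have key : ∀ n : ℕ, ∀ m : ℤ, M - n ≤ m → a m w = 0 := by
    intro n
    induction n with
    | zero => intro m hm; exact hM m (by simpa using hm)
    | succ n ih =>
        intro m hm
        by_cases hcase : M - n ≤ m
        · exact ih m hcase
        push_neg at hcase
        have hrel : polyAct N W p a (m - t * N) w = 0 := by rw [hpa]; rfl
        rw [polyAct_apply_apply] at hrel
        have hsingle :
            ∑ i ∈ Finset.range (p.natDegree + 1),
              p.coeff i • a (m - t * N + i * N) w = p.coeff t • a m w := by
          rw [Finset.sum_eq_single t]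
          · congr 2; ring
          · intro i _ hit
            rcases lt_or_gt_of_ne hit with hlt | hgt
            · rw [Polynomial.coeff_eq_zero_of_lt_natTrailingDegree hlt, zero_smul]
            · have : a (m - t * N + i * N) w = 0 := by
                apply ih
                have h1 : (t : ℤ) + 1 ≤ (i : ℤ) := by exact_mod_cast hgt
                have h2 : (1 : ℤ) ≤ N := by exact_mod_cast hN
                have h3 : (1:ℤ) ≤ ((i:ℤ) - t) * N := by nlinarith
                push_cast at hm
                nlinarith
              rw [this, smul_zero]
          · intro habs
            exact absurd (Finset.mem_range.mpr (Nat.lt_succ_of_le htD)) habs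
        rw [hsingle] at hrel
        exact (smul_eq_zero.mp hrel).resolve_left hct
  have : M - ((M - k).toNat : ℤ) ≤ k := by
    have := Int.self_le_toNat (M - k)
    omega
  exact key (M - k).toNat k this


lemma memE_polyAct (p : Polynomial ℂ) (a : ℤ → Module.End ℂ W) (ha : memE W a) :
    memE W (polyAct N W p a) := by
  intro w
  obtain ⟨M, hM⟩ := ha w
  refine ⟨M, fun k hk => ?_⟩
  rw [polyAct_apply_apply]
  apply Finset.sum_eq_zero
  intro i _
  have h0 : (0:ℤ) ≤ (i:ℤ) * N := by positivity
  rw [hM (k + i * N) (by linarith), smul_zero]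

lemma part3 (b c : ℤ → Module.End ℂ W) (hb : memE W b) (hc : memE0 N W c) :
    memEbar N W (b + c) := by
  obtain ⟨q, hq, hqc⟩ := hc
  refine ⟨q, hq, ?_⟩
  have : polyAct N W q (b + c) = polyAct N W q b := by
    show (Polynomial.aeval (shiftE N W) q) (b + c) = _
    rw [map_add]
    show _ + polyAct N W q c = _
    rw [hqc, add_zero]
    rfl
  rw [this]
  exact memE_polyAct N W q b hb


lemma sumB {V : Type*} [AddCommMonoid V] (n : ℕ) (f : ℕ → ℕ → V)
    (h : ∀ l j, n ≤ l + j → f l j = 0) :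
    ∑ l ∈ Finset.range n, ∑ j ∈ Finset.range n, f l j =
      ∑ m ∈ Finset.range n, ∑ q ∈ Finset.HasAntidiagonal.antidiagonal m, f q.1 q.2 := by
  have hdisj : (↑(Finset.range n) : Set ℕ).PairwiseDisjoint Finset.HasAntidiagonal.antidiagonal := by
    intro x _ y _ hxy
    simp only [Finset.disjoint_left]
    intro q hqx hqy
    rw [Finset.HasAntidiagonal.mem_antidiagonal] at hqx hqy
    exact hxy (hqx ▸ hqy)
  rw [← Finset.sum_product', ← Finset.sum_biUnion hdisj]
  refine (Finset.sum_subset ?_ ?_).symm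
  · intro q hq
    rw [Finset.mem_biUnion] at hq
    obtain ⟨m, hm, hq⟩ := hq
    rw [Finset.HasAntidiagonal.mem_antidiagonal] at hq
    rw [Finset.mem_range] at hm
    rw [Finset.mem_product, Finset.mem_range, Finset.mem_range]
    omega
  · intro q _ hq
    apply h
    by_contra hlt
    push_neg at hlt
    exact hq (Finset.mem_biUnion.mpr ⟨q.1 + q.2, Finset.mem_range.mpr hlt,
      Finset.HasAntidiagonal.mem_antidiagonal.mpr rfl⟩)


lemma part2 (hN : 0 < N) (a : ℤ → Module.End ℂ W) (h : memEbar N W a) :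
    ∃ b c : ℤ → Module.End ℂ W, memE W b ∧ memE0 N W c ∧ a = b + c := by
  obtain ⟨p, hp, he⟩ := h
  set e := polyAct N W p a with hedef
  set t := p.natTrailingDegree with htdef
  set D := p.natDegree with hDdef
  have htD : t ≤ D := p.natTrailingDegree_le_natDegree
  set Q : PowerSeries ℂ := PowerSeries.mk (fun j => p.coeff (t + j)) with hQdef
  have hQ0 : PowerSeries.constantCoeff Q ≠ 0 := by
    have : PowerSeries.constantCoeff Q = p.coeff t := by
      simp [hQdef]
    rw [this, ← Polynomial.trailingCoeff]
    exact mt Polynomial.trailingCoeff_eq_zero.mp hp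
  set d : ℕ → ℂ := fun j => PowerSeries.coeff j Q⁻¹ with hddef
  have hconv : ∀ m : ℕ,
      (∑ q ∈ Finset.HasAntidiagonal.antidiagonal m, p.coeff (t + q.1) * d q.2)
        = if m = 0 then 1 else 0 := by
    intro m
    have h1 : Q * Q⁻¹ = 1 := PowerSeries.mul_inv_cancel Q hQ0
    have h2 := congrArg (PowerSeries.coeff m) h1
    rw [PowerSeries.coeff_mul, PowerSeries.coeff_one] at h2
    simpa [hQdef, hddef] using h2
  -- the candidate function
  set bfun : ℤ → W → W :=
    fun k w => ∑ᶠ j : ℕ, d j • e (k - t * N + j * N) w with hbfun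
  have hNz : (1 : ℤ) ≤ N := by exact_mod_cast hN
  have hJex : ∀ (k : ℤ) (w : W), ∃ J : ℕ, ∀ j : ℕ, J ≤ j → e (k - t * N + j * N) w = 0 := by
    intro k w
    obtain ⟨M, hM⟩ := he w
    refine ⟨(M - k + t * N).toNat, fun j hj => ?_⟩
    apply hM
    have h1 : (M - k + t * N : ℤ) ≤ j :=
      le_trans (Int.self_le_toNat _) (by exact_mod_cast hj)
    have h2 : (j : ℤ) ≤ (j : ℤ) * N := by nlinarith [Int.ofNat_nonneg j]
    linarith
  have hrepr : ∀ (k : ℤ) (w : W) (J : ℕ), (∀ j : ℕ, J ≤ j → e (k - t * N + j * N) w = 0) →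
      bfun k w = ∑ j ∈ Finset.range J, d j • e (k - t * N + j * N) w := by
    intro k w J hJ
    apply finsum_eq_sum_of_support_subset
    intro j hj
    simp only [Function.mem_support] at hj
    simp only [Finset.coe_range, Set.mem_Iio]
    by_contra hge
    push_neg at hge
    exact hj (by rw [hJ j hge, smul_zero])
  set b : ℤ → Module.End ℂ W := fun k =>
    { toFun := bfun k
      map_add' := by
        intro w1 w2
        obtain ⟨J1, h1⟩ := hJex k w1
        obtain ⟨J2, h2⟩ := hJex k w2
        set J := max J1 J2 with hJ
        have h1' : ∀ j : ℕ, J ≤ j → e (k - t * N + j * N) w1 = 0 :=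
          fun j hj => h1 j (le_trans (le_max_left _ _) hj)
        have h2' : ∀ j : ℕ, J ≤ j → e (k - t * N + j * N) w2 = 0 :=
          fun j hj => h2 j (le_trans (le_max_right _ _) hj)
        have h12 : ∀ j : ℕ, J ≤ j → e (k - t * N + j * N) (w1 + w2) = 0 := by
          intro j hj
          rw [map_add, h1' j hj, h2' j hj, add_zero]
        show bfun k (w1 + w2) = bfun k w1 + bfun k w2
        rw [hrepr k (w1 + w2) J h12, hrepr k w1 J h1', hrepr k w2 J h2',
          ← Finset.sum_add_distrib]
        exact Finset.sum_congr rfl fun j _ => by rw [map_add, smul_add]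
      map_smul' := by
        intro r w
        obtain ⟨J, hJ⟩ := hJex k w
        have hrw : ∀ j : ℕ, J ≤ j → e (k - t * N + j * N) (r • w) = 0 := by
          intro j hj
          rw [map_smul, hJ j hj, smul_zero]
        show bfun k (r • w) = r • bfun k w
        rw [hrepr k (r • w) J hrw, hrepr k w J hJ, Finset.smul_sum]
        exact Finset.sum_congr rfl fun j _ => by
          rw [map_smul, smul_comm] } with hbdef
  have hbE : memE W b := by
    intro w
    obtain ⟨M, hM⟩ := he w
    refine ⟨M + t * N, fun k hk => ?_⟩
    show bfun k w = 0
    have hz : ∀ j : ℕ, (0:ℕ) ≤ j → e (k - t * N + j * N) w = 0 := by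
      intro j _
      apply hM
      have h2 : (0 : ℤ) ≤ (j : ℤ) * N := by positivity
      linarith
    rw [hrepr k w 0 hz]
    simp
  -- the key identity : polyAct p b = e
  have hpb : polyAct N W p b = e := by
    funext k
    ext w
    obtain ⟨M, hM⟩ := he w
    set J0 : ℕ := (M - k).toNat + 1 with hJ0
    set G : ℕ → W := fun m => e (k + (m : ℤ) * N) w with hGdef
    have hG : ∀ m : ℕ, J0 ≤ m → G m = 0 := by
      intro m hm
      apply hM
      have h1 : (M - k : ℤ) ≤ (M - k).toNat := Int.self_le_toNat _
      have h2 : ((M - k).toNat + 1 : ℤ) ≤ (m : ℤ) := by exact_mod_cast hm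
      have h3 : (m : ℤ) ≤ (m : ℤ) * N := by nlinarith [Int.ofNat_nonneg m]
      linarith
    have hbG : ∀ l : ℕ, bfun (k + ((t + l : ℕ) : ℤ) * N) w
        = ∑ j ∈ Finset.range J0, d j • G (l + j) := by
      intro l
      have harg : ∀ j : ℕ,
          (k + ((t + l : ℕ) : ℤ) * N - t * N + j * N) = k + ((l + j : ℕ) : ℤ) * N := by
        intro j; push_cast; ring
      have hv : ∀ j : ℕ, J0 ≤ j → e (k + ((t + l : ℕ) : ℤ) * N - t * N + j * N) w = 0 := by
        intro j hj
        rw [harg j]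
        exact hG (l + j) (le_trans hj (Nat.le_add_left _ _))
      rw [hrepr _ w J0 hv]
      exact Finset.sum_congr rfl fun j _ => by rw [harg j]
    set n : ℕ := (D + 1) + J0 with hn
    set f : ℕ → ℕ → W := fun l j => (p.coeff (t + l) * d j) • G (l + j) with hfdef
    have hfz : ∀ l j : ℕ, n ≤ l + j → f l j = 0 := by
      intro l j hlj
      have : G (l + j) = 0 := hG (l + j) (by omega)
      simp [hfdef, this]
    calc polyAct N W p b k w
        = ∑ i ∈ Finset.range (D + 1), p.coeff i • b (k + (i : ℤ) * N) w := by
          rw [polyAct_apply_apply]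
      _ = ∑ i ∈ Finset.range (t + (D + 1)), p.coeff i • b (k + (i : ℤ) * N) w := by
          refine Finset.sum_subset (Finset.range_subset_range.mpr (by omega)) ?_
          intro i _ hi
          rw [Finset.mem_range, not_lt] at hi
          rw [Polynomial.coeff_eq_zero_of_natDegree_lt (by omega), zero_smul]
      _ = (∑ i ∈ Finset.range t, p.coeff i • b (k + (i : ℤ) * N) w)
            + ∑ l ∈ Finset.range (D + 1), p.coeff (t + l) • b (k + ((t + l : ℕ) : ℤ) * N) w := by
          rw [Finset.sum_range_add]
      _ = ∑ l ∈ Finset.range (D + 1), p.coeff (t + l) • b (k + ((t + l : ℕ) : ℤ) * N) w := by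
          rw [Finset.sum_eq_zero, zero_add]
          intro i hi
          rw [Finset.mem_range] at hi
          rw [Polynomial.coeff_eq_zero_of_lt_natTrailingDegree hi, zero_smul]
      _ = ∑ l ∈ Finset.range (D + 1), ∑ j ∈ Finset.range J0, f l j := by
          refine Finset.sum_congr rfl fun l _ => ?_
          have : b (k + ((t + l : ℕ) : ℤ) * N) w = bfun (k + ((t + l : ℕ) : ℤ) * N) w := rfl
          rw [this, hbG l, Finset.smul_sum]
          exact Finset.sum_congr rfl fun j _ => by rw [smul_smul]
      _ = ∑ l ∈ Finset.range (D + 1), ∑ j ∈ Finset.range n, f l j := by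
          refine Finset.sum_congr rfl fun l _ => ?_
          refine Finset.sum_subset (Finset.range_subset_range.mpr (by omega)) ?_
          intro j _ hj
          rw [Finset.mem_range, not_lt] at hj
          have : G (l + j) = 0 := hG (l + j) (by omega)
          simp [hfdef, this]
      _ = ∑ l ∈ Finset.range n, ∑ j ∈ Finset.range n, f l j := by
          refine Finset.sum_subset (Finset.range_subset_range.mpr (by omega)) ?_
          intro l _ hl
          rw [Finset.mem_range, not_lt] at hl
          refine Finset.sum_eq_zero fun j _ => ?_
          have : p.coeff (t + l) = 0 :=
            Polynomial.coeff_eq_zero_of_natDegree_lt (by omega)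
          simp [hfdef, this]
      _ = ∑ m ∈ Finset.range n, ∑ q ∈ Finset.HasAntidiagonal.antidiagonal m, f q.1 q.2 := sumB n f hfz
      _ = ∑ m ∈ Finset.range n, (if m = 0 then (1 : ℂ) else 0) • G m := by
          refine Finset.sum_congr rfl fun m _ => ?_
          rw [← hconv m, Finset.sum_smul]
          refine Finset.sum_congr rfl fun q hq => ?_
          rw [Finset.HasAntidiagonal.mem_antidiagonal] at hq
          simp [hfdef, hq]
      _ = G 0 := by
          rw [Finset.sum_eq_single 0]
          · simp
          · intro m _ hm
            simp [hm]
          · intro habs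
            exact absurd (Finset.mem_range.mpr (by omega)) habs
      _ = e k w := by simp [hGdef]
  refine ⟨b, a - b, hbE, ⟨p, hp, ?_⟩, by abel⟩
  show (Polynomial.aeval (shiftE N W) p) (a - b) = 0
  rw [map_sub]
  have h1 : (Polynomial.aeval (shiftE N W) p) b = e := hpb
  have h2 : (Polynomial.aeval (shiftE N W) p) a = e := hedef.symm
  rw [h1, h2, sub_self]


/-- `Ē(W) = E(W) ⊕ Ē₀(W)`:  the subspaces `E(W)` and `Ē₀(W)` intersect
trivially, every element of `Ē(W)` is a sum of an element of `E(W)` and an element of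
`Ē₀(W)`, and conversely any such sum lies in `Ē(W)`. -/
theorem statement7 (N : ℕ) (hN : 0 < N) (W : Type) [AddCommGroup W] [Module ℂ W] :
    (∀ a : ℤ → Module.End ℂ W, memE W a → memE0 N W a → a = 0) ∧
    (∀ a : ℤ → Module.End ℂ W, memEbar N W a →
      ∃ b c : ℤ → Module.End ℂ W, memE W b ∧ memE0 N W c ∧ a = b + c) ∧
    (∀ b c : ℤ → Module.End ℂ W, memE W b → memE0 N W c → memEbar N W (b + c)) := by
  refine ⟨?_, ?_, ?_⟩
  · intro a ha h0
    obtain ⟨p, hp, hpa⟩ := h0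
    exact part1 N W hN a ha p hp hpa
  · intro a h
    exact part2 N W hN a h
  · intro b c hb hc
    exact part3 N W b c hb hc

end Twisted
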